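/- For every x ≥ √3 and every τ ∈ [0,1) with xτ < 1, one has (1/2)·log((1+xτ)/(1−xτ)) − xτ/(1−τ²) ≥ 0; equivalently, (1+xτ)·e^{−xτ/(1−τ²)} ≥ (1−xτ)·e^{xτ/(1−τ²)}. -/

import Mathlib

open MeasureTheory

noncomputable section

private lemma key_ineq (t : ℝ) (ht0 : 0 ≤ t) (ht1 : t < 1) :
    2 * t / (1 - t ^ 2 / 3) ≤ Real.log ((1 + t) / (1 - t)) := by
  set g : ℝ → ℝ := fun s => Real.log (1 + s) - Real.log (1 - s) - 2 * s / (1 - s ^ 2 / 3)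
    with hg
  have hmono : MonotoneOn g (Set.Ico (0:ℝ) 1) := by
    have hderiv : ∀ s ∈ Set.Ico (0:ℝ) 1, HasDerivAt g
        (1 / (1 + s) - (-1) / (1 - s) -
          (2 * (1 - s ^ 2 / 3) - 2 * s * (-(2 * s) / 3)) / (1 - s ^ 2 / 3) ^ 2) s := by
      intro s hs
      obtain ⟨hs0, hs1⟩ := hs
      have h1p : (0:ℝ) < 1 + s := by linarith
      have h1m : (0:ℝ) < 1 - s := by linarith
      have hq : (0:ℝ) < 1 - s ^ 2 / 3 := by nlinarith
      have d1 : HasDerivAt (fun s : ℝ => Real.log (1 + s)) (1 / (1 + s)) s := by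
        have := ((hasDerivAt_id s).const_add 1).log h1p.ne'
        simpa using this
      have d2 : HasDerivAt (fun s : ℝ => Real.log (1 - s)) ((-1) / (1 - s)) s := by
        have : HasDerivAt (fun s : ℝ => 1 - s) (-1) s := by
          simpa using ((hasDerivAt_id s).const_sub 1)
        exact this.log h1m.ne'
      have d3 : HasDerivAt (fun s : ℝ => 2 * s / (1 - s ^ 2 / 3))
          ((2 * (1 - s ^ 2 / 3) - 2 * s * (-(2 * s) / 3)) / (1 - s ^ 2 / 3) ^ 2) s := by
        have dn : HasDerivAt (fun s : ℝ => 2 * s) 2 s := by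
          simpa using (hasDerivAt_id s).const_mul 2
        have dd : HasDerivAt (fun s : ℝ => 1 - s ^ 2 / 3) (-(2 * s) / 3) s := by
          have := (hasDerivAt_pow 2 s).div_const 3
          have := this.const_sub 1
          simpa [neg_div] using this
        exact dn.div dd hq.ne'
      exact (d1.sub d2).sub d3
    apply monotoneOn_of_deriv_nonneg (convex_Ico 0 1)
    · intro s hs
      exact (hderiv s hs).continuousAt.continuousWithinAt
    · intro s hs
      rw [interior_Ico] at hs
      exact ((hderiv s ⟨hs.1.le, hs.2⟩).differentiableAt).differentiableWithinAt
    · intro s hs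
      rw [interior_Ico] at hs
      obtain ⟨hs0, hs1⟩ := hs
      rw [(hderiv s ⟨hs0.le, hs1⟩).deriv]
      have h1p : (0:ℝ) < 1 + s := by linarith
      have h1m : (0:ℝ) < 1 - s := by linarith
      have hq : (0:ℝ) < 1 - s ^ 2 / 3 := by nlinarith
      rw [div_sub_div _ _ h1p.ne' h1m.ne', sub_nonneg, div_le_div_iff₀ (by positivity)
        (by positivity)]
      nlinarith [sq_nonneg s, sq_nonneg (s^2), mul_pos h1p h1m, sq_nonneg (s*(1-s^2))]
  have h0 : g 0 ≤ g t := hmono (by constructor <;> norm_num) ⟨ht0, ht1⟩ ht0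
  have hg0 : g 0 = 0 := by simp [hg]
  have h1p : (0:ℝ) < 1 + t := by linarith
  have h1m : (0:ℝ) < 1 - t := by linarith
  have hlog : Real.log ((1 + t) / (1 - t)) = Real.log (1 + t) - Real.log (1 - t) :=
    Real.log_div h1p.ne' h1m.ne'
  rw [hlog]
  have := h0
  rw [hg0] at this
  simp only [hg] at this
  linarith

theorem log_inequality (x τ : ℝ) (hx : Real.sqrt 3 ≤ x)
    (hτ : τ ∈ Set.Ico (0 : ℝ) 1) (hxτ : x * τ < 1) :
    0 ≤ 1 / 2 * Real.log ((1 + x * τ) / (1 - x * τ)) - x * τ / (1 - τ ^ 2) ∧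
      (1 - x * τ) * Real.exp (x * τ / (1 - τ ^ 2)) ≤
        (1 + x * τ) * Real.exp (-(x * τ) / (1 - τ ^ 2)) := by
  obtain ⟨hτ0, hτ1⟩ := hτ
  have hx0 : (0:ℝ) < x := lt_of_lt_of_le (by positivity) hx
  set t := x * τ with ht
  have ht0 : 0 ≤ t := by positivity
  have ht1 : t < 1 := hxτ
  have hx3 : (3:ℝ) ≤ x ^ 2 := by
    nlinarith [Real.sq_sqrt (by norm_num : (3:ℝ) ≥ 0), Real.sqrt_nonneg 3]
  have hτsq : τ ^ 2 ≤ t ^ 2 / 3 := by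
    have : 3 * τ ^ 2 ≤ x ^ 2 * τ ^ 2 := by nlinarith [sq_nonneg τ]
    calc τ ^ 2 ≤ x ^ 2 * τ ^ 2 / 3 := by linarith
    _ = t ^ 2 / 3 := by rw [ht]; ring
  have hq : (0:ℝ) < 1 - t ^ 2 / 3 := by nlinarith
  have hτq : (0:ℝ) < 1 - τ ^ 2 := by nlinarith
  have hcmp : t / (1 - τ ^ 2) ≤ t / (1 - t ^ 2 / 3) := by
    apply div_le_div_of_nonneg_left ht0 hq
    linarith
  have hkey := key_ineq t ht0 ht1
  have hfirst : 0 ≤ 1 / 2 * Real.log ((1 + t) / (1 - t)) - t / (1 - τ ^ 2) := by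
    have h2 : 2 * t / (1 - t ^ 2 / 3) = 2 * (t / (1 - t ^ 2 / 3)) := by ring
    linarith
  refine ⟨hfirst, ?_⟩
  have h1p : (0:ℝ) < 1 + t := by linarith
  have h1m : (0:ℝ) < 1 - t := by linarith
  set c := t / (1 - τ ^ 2) with hc
  have hexp : Real.exp (2 * c) ≤ (1 + t) / (1 - t) := by
    have h2c : 2 * c ≤ Real.log ((1 + t) / (1 - t)) := by linarith
    calc Real.exp (2 * c) ≤ Real.exp (Real.log ((1 + t) / (1 - t))) :=
          Real.exp_le_exp.mpr h2c
      _ = (1 + t) / (1 - t) := Real.exp_log (by positivity)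
  have : (1 - t) * Real.exp c ≤ (1 + t) * Real.exp (-c) := by
    have hpos : (0:ℝ) < Real.exp (-c) := Real.exp_pos _
    have : Real.exp c = Real.exp (2 * c) * Real.exp (-c) := by
      rw [← Real.exp_add]; ring_nf
    rw [this]
    calc (1 - t) * (Real.exp (2 * c) * Real.exp (-c))
        ≤ (1 - t) * ((1 + t) / (1 - t) * Real.exp (-c)) := by
          apply mul_le_mul_of_nonneg_left _ h1m.le
          exact mul_le_mul_of_nonneg_right hexp hpos.le
      _ = (1 + t) * Real.exp (-c) := by field_simp
  simpa [hc, neg_div] using this
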